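/- Let U ≥ 1, D > 1, and let ℓ be continuously differentiable on an open neighborhood of Ω̃. Suppose that for every ω on the boundary of Ω̃ and every outward normal direction n at ω (a unit vector in the cone generated by the gradients of the active constraints among ξ_i − U ≤ 0, −ξ_i − U ≤ 0, (Ξ_ii − ξ_i²) − D ≤ 0, D⁻¹ − (Ξ_ii − ξ_i²) ≤ 0), one has ⟨−(∇²A*(ω))⁻¹ ∇ℓ(ω), n⟩ < 0. Then for every ω ∈ Ω̃ there exists ρ₀ > 0 such that for all ρ ≥ ρ₀: ℰ_ρ(ω) ≥ ‖∇ℓ(ω)‖² / (2·C_L), where C_L = (9/2)·U²·D². -/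

import Mathlib

open MeasureTheory
open scoped RealInnerProductSpace

noncomputable section

/-- The space of mean-field expectation parameters `ω = (ξ, Ξ) ∈ ℝ^d × ℝ^d`,
realized as a Euclidean space indexed by `Fin d ⊕ Fin d`. -/
abbrev MFParam (d : ℕ) := EuclideanSpace ℝ (Fin d ⊕ Fin d)

def xiP {d : ℕ} (ω : MFParam d) (i : Fin d) : ℝ := ω (Sum.inl i)

def XiP {d : ℕ} (ω : MFParam d) (i : Fin d) : ℝ := ω (Sum.inr i)

def varP {d : ℕ} (ω : MFParam d) (i : Fin d) : ℝ := XiP ω i - (xiP ω i) ^ 2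

/-- The mirror map `A*(ξ, Ξ) = -(1/2) ∑ i, log (Ξ_ii - ξ_i²)`. -/
def Astar {d : ℕ} (ω : MFParam d) : ℝ := -(1 / 2) * ∑ i, Real.log (varP ω i)

/-- The Bregman divergence `D_{A*}(u, v)`. -/
def bregAstar {d : ℕ} (u v : MFParam d) : ℝ :=
  Astar u - Astar v - ⟪gradient Astar v, u - v⟫

/-- The bounded parameter domain `Ω̃`. -/
def OmegaT (d : ℕ) (U D : ℝ) : Set (MFParam d) :=
  {ω | ∀ i, |xiP ω i| ≤ U ∧ D⁻¹ ≤ varP ω i ∧ varP ω i ≤ D}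

/-- The Bregman forward–backward envelope
`ℰ_ρ(ω) = −2ρ · min_{ω' ∈ Ω̃} [⟨∇ℓ(ω), ω' − ω⟩ + ρ D_{A*}(ω', ω)]`. -/
def bfbe (d : ℕ) (U D : ℝ) (ℓ : MFParam d → ℝ) (ρ : ℝ) (w : MFParam d) : ℝ :=
  -2 * ρ * sInf ((fun w' => ⟪gradient ℓ w, w' - w⟫ + ρ * bregAstar w' w) '' OmegaT d U D)

/-- The inverse Hessian `(∇²A*(ω))⁻¹` of the mirror map, applied to a vector `g`. -/
def invHessAstar {d : ℕ} (ω : MFParam d) (g : MFParam d) : MFParam d :=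
  WithLp.toLp 2 (fun k => match k with
  | Sum.inl i => varP ω i * g (Sum.inl i) + 2 * xiP ω i * varP ω i * g (Sum.inr i)
  | Sum.inr i => 2 * xiP ω i * varP ω i * g (Sum.inl i) +
      (4 * (xiP ω i) ^ 2 * varP ω i + 2 * (varP ω i) ^ 2) * g (Sum.inr i))

/-- Outward normal directions at a boundary point `ω` of `Ω̃`: unit vectors in the cone
generated by the gradients of the active constraints among `ξ_i − U ≤ 0`, `−ξ_i − U ≤ 0`,
`(Ξ_ii − ξ_i²) − D ≤ 0`, `D⁻¹ − (Ξ_ii − ξ_i²) ≤ 0`. -/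
def outwardNormals (d : ℕ) (U D : ℝ) (ω : MFParam d) : Set (MFParam d) :=
  {n | ‖n‖ = 1 ∧ ∃ c₁ c₂ c₃ c₄ : Fin d → ℝ,
    (∀ i, 0 ≤ c₁ i ∧ 0 ≤ c₂ i ∧ 0 ≤ c₃ i ∧ 0 ≤ c₄ i) ∧
    (∀ i, c₁ i ≠ 0 → xiP ω i = U) ∧
    (∀ i, c₂ i ≠ 0 → xiP ω i = -U) ∧
    (∀ i, c₃ i ≠ 0 → varP ω i = D) ∧
    (∀ i, c₄ i ≠ 0 → varP ω i = D⁻¹) ∧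
    n = ∑ i : Fin d,
      (c₁ i • (EuclideanSpace.single (Sum.inl i) (1 : ℝ) : MFParam d) +
       c₂ i • (-(EuclideanSpace.single (Sum.inl i) (1 : ℝ) : MFParam d)) +
       c₃ i • ((EuclideanSpace.single (Sum.inr i) (1 : ℝ) : MFParam d) -
          (2 * xiP ω i) • (EuclideanSpace.single (Sum.inl i) (1 : ℝ) : MFParam d)) +
       c₄ i • ((2 * xiP ω i) • (EuclideanSpace.single (Sum.inl i) (1 : ℝ) : MFParam d) -
          (EuclideanSpace.single (Sum.inr i) (1 : ℝ) : MFParam d)))}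


lemma quad_nonneg_small (h0 h1 h2 : ℝ)
    (h : 0 < h0 ∨ (0 ≤ h0 ∧ 0 < h1) ∨ (0 ≤ h0 ∧ 0 ≤ h1 ∧ 0 ≤ h2)) :
    ∃ ε : ℝ, 0 < ε ∧ ∀ t : ℝ, 0 ≤ t → t ≤ ε → 0 ≤ h0 + h1 * t + h2 * t ^ 2 := by
  rcases h with h | ⟨h0n, h1p⟩ | ⟨h0n, h1n, h2n⟩
  · refine ⟨min 1 (h0 / (|h1| + |h2| + 1)), by positivity, ?_⟩
    intro t ht htle
    have ht1 : t ≤ 1 := le_trans htle (min_le_left _ _)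
    have hd : (0:ℝ) < |h1| + |h2| + 1 := by positivity
    have ht2 : t * (|h1| + |h2| + 1) ≤ h0 := by
      have := le_trans htle (min_le_right _ _)
      calc t * (|h1| + |h2| + 1) ≤ (h0 / (|h1| + |h2| + 1)) * (|h1| + |h2| + 1) := by
            apply mul_le_mul_of_nonneg_right this (le_of_lt hd)
        _ = h0 := by field_simp
    have e1 : -|h1| * t ≤ h1 * t := mul_le_mul_of_nonneg_right (neg_abs_le h1) ht
    have e2 : -|h2| * (t*t) ≤ h2 * (t*t) :=
      mul_le_mul_of_nonneg_right (neg_abs_le h2) (mul_nonneg ht ht)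
    have e3 : |h2| * (t*t) ≤ |h2| * t := by
      have : t * t ≤ t * 1 := mul_le_mul_of_nonneg_left ht1 ht
      nlinarith [abs_nonneg h2]
    nlinarith [abs_nonneg h1, abs_nonneg h2]
  · refine ⟨h1 / (|h2| + 1), by positivity, ?_⟩
    intro t ht htle
    have hd : (0:ℝ) < |h2| + 1 := by positivity
    have ht2 : t * (|h2| + 1) ≤ h1 := by
      calc t * (|h2| + 1) ≤ (h1 / (|h2| + 1)) * (|h2| + 1) :=
            mul_le_mul_of_nonneg_right htle (le_of_lt hd)
        _ = h1 := by field_simp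
    have hA : |h2| * t ≤ h1 := by nlinarith
    have hB : |h2| * t * t ≤ h1 * t := mul_le_mul_of_nonneg_right hA ht
    have hC : -(|h2| * t * t) ≤ h2 * t^2 := by nlinarith [neg_abs_le h2, mul_nonneg ht ht]
    linarith
  · exact ⟨1, one_pos, fun t ht _ => by positivity⟩

lemma neg_log_le_quad {u : ℝ} (h : |u| ≤ 1/5) : -Real.log (1 - u) ≤ u + (5/4) * u ^ 2 := by
  obtain ⟨hl, hr⟩ := abs_le.1 h
  have h1 : (0:ℝ) < 1 - u := by linarith
  have h3 : Real.log (1-u)⁻¹ ≤ (1-u)⁻¹ - 1 := Real.log_le_sub_one_of_pos (by positivity)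
  have h2 : -Real.log (1-u) = Real.log (1-u)⁻¹ := (Real.log_inv _).symm
  have h4 : (1-u)⁻¹ - 1 = u / (1-u) := by field_simp; ring
  have h5 : u / (1-u) ≤ u + (5/4)*u^2 := by
    rw [div_le_iff₀ h1]
    nlinarith [mul_nonneg (sq_nonneg u) (by linarith : (0:ℝ) ≤ 1 - 5*u)]
  linarith

lemma block_lb (U D s x a b : ℝ) (hU : 1 ≤ U) (hD : 1 < D) (hs1 : 1 ≤ s * D)
    (hx : x^2 ≤ U^2) (hspos : 0 < s) :
    2*(a^2+b^2) ≤ 7*U^2*D^2 * (s*(a+2*x*b)^2 + 2*s^2*b^2) := by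
  have hU2 : 1 ≤ U^2 := by nlinarith
  have hDpos : (0:ℝ) < D := by linarith
  have hDs : (1:ℝ) ≤ D * s := by nlinarith
  have hUD : (1:ℝ) ≤ U^2 * D := by nlinarith
  have hprod : (1:ℝ) ≤ (U^2*D) * (D*s) := by nlinarith
  have k1 : 6 ≤ 7*U^2*D^2*s := by nlinarith
  have h6 : 6*(a+2*x*b)^2 ≤ 7*U^2*D^2*s*(a+2*x*b)^2 := by
    nlinarith [sq_nonneg (a+2*x*b)]
  have hDs2 : (1:ℝ) ≤ (D*s)^2 := by nlinarith
  have k2 : 12*U^2 + 2 ≤ 14*U^2*D^2*s^2 := by nlinarith [mul_le_mul hU2 hDs2 (by positivity) (by positivity)]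
  have h14 : (12*U^2+2)*b^2 ≤ 14*U^2*D^2*s^2*b^2 := by nlinarith [sq_nonneg b]
  have h4 : 2*(a^2) ≤ 6*(a+2*x*b)^2 + 12*x^2*b^2 := by nlinarith [sq_nonneg (a+3*x*b)]
  have hx12 : 12*x^2*b^2 ≤ 12*U^2*b^2 := by nlinarith [sq_nonneg b]
  nlinarith [sq_nonneg b]


def gradAstar {d : ℕ} (ω : MFParam d) : MFParam d := WithLp.toLp 2 (fun k => match k with
  | Sum.inl i => xiP ω i / varP ω i
  | Sum.inr i => -(1/(2 * varP ω i)))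

lemma hasFDerivAt_varP {d : ℕ} (ω : MFParam d) (i : Fin d) :
    HasFDerivAt (fun w : MFParam d => varP w i)
      (EuclideanSpace.proj (Sum.inr i) -
        (2 * xiP ω i) • (EuclideanSpace.proj (Sum.inl i) : MFParam d →L[ℝ] ℝ)) ω := by
  have h1 : HasFDerivAt (fun w : MFParam d => w (Sum.inr i))
      (EuclideanSpace.proj (Sum.inr i) : MFParam d →L[ℝ] ℝ) ω :=
    (EuclideanSpace.proj (Sum.inr i) : MFParam d →L[ℝ] ℝ).hasFDerivAt
  have h2 : HasFDerivAt (fun w : MFParam d => w (Sum.inl i))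
      (EuclideanSpace.proj (Sum.inl i) : MFParam d →L[ℝ] ℝ) ω :=
    (EuclideanSpace.proj (Sum.inl i) : MFParam d →L[ℝ] ℝ).hasFDerivAt
  have h4 := h1.sub (h2.mul h2)
  have hfun : (fun w : MFParam d => w (Sum.inr i) - w (Sum.inl i) * w (Sum.inl i))
      = (fun w : MFParam d => varP w i) := by
    ext w; simp [varP, XiP, xiP]; ring
  rw [show ((fun w : MFParam d => w (Sum.inr i)) - (fun w : MFParam d => w (Sum.inl i)) * fun w : MFParam d => w (Sum.inl i)) = (fun w : MFParam d => varP w i) from hfun] at h4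
  refine h4.congr_fderiv ?_
  ext u
  simp [xiP]
  ring

lemma hasGradientAt_Astar {d : ℕ} (ω : MFParam d) (hpos : ∀ i, 0 < varP ω i) :
    HasGradientAt Astar (gradAstar ω) ω := by
  rw [hasGradientAt_iff_hasFDerivAt]
  have hlog : ∀ i : Fin d, HasFDerivAt (fun w : MFParam d => Real.log (varP w i))
      ((varP ω i)⁻¹ • (EuclideanSpace.proj (Sum.inr i) -
        (2 * xiP ω i) • (EuclideanSpace.proj (Sum.inl i) : MFParam d →L[ℝ] ℝ))) ω := by
    intro i
    exact (hasFDerivAt_varP ω i).log (ne_of_gt (hpos i))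
  have hsum := HasFDerivAt.fun_sum (u := Finset.univ)
    (fun i _ => hlog i)
  have hA := hsum.const_mul (-(1/2) : ℝ)
  have : Astar = fun w : MFParam d => (-(1/2) : ℝ) * ∑ i : Fin d, Real.log (varP w i) := by
    ext w; simp [Astar]
  rw [this]
  refine hA.congr_fderiv ?_
  apply ContinuousLinearMap.ext
  intro u
  simp only [ContinuousLinearMap.smul_apply, ContinuousLinearMap.sum_apply,
    ContinuousLinearMap.sub_apply, PiLp.proj_apply, InnerProductSpace.toDual_apply_apply,
    PiLp.inner_apply, RCLike.inner_apply, conj_trivial, smul_eq_mul]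
  rw [Fintype.sum_sum_type, Finset.mul_sum, ← Finset.sum_add_distrib]
  refine Finset.sum_congr rfl fun i _ => ?_
  have h := (hpos i).ne'
  simp only [gradAstar, PiLp.toLp_apply]
  field_simp
  ring


lemma mem_frontier_of_active {d : ℕ} {U D : ℝ} (hU : 1 ≤ U) (hD : 1 < D) {ω : MFParam d}
    (hω : ω ∈ OmegaT d U D) (i : Fin d)
    (hact : xiP ω i = U ∨ xiP ω i = -U ∨ varP ω i = D ∨ varP ω i = D⁻¹) :
    ω ∈ frontier (OmegaT d U D) := by
  rw [frontier, Set.mem_diff]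
  refine ⟨subset_closure hω, ?_⟩
  intro hin
  obtain ⟨ε, hε, hball⟩ := Metric.mem_nhds_iff.1 (mem_interior_iff_mem_nhds.1 hin)
  have hmem : ∀ σ : ℝ, ∀ k : Fin d ⊕ Fin d, |σ| < ε →
      (ω + σ • (EuclideanSpace.single k (1:ℝ) : MFParam d)) ∈ OmegaT d U D := by
    intro σ k hσ
    apply hball
    rw [Metric.mem_ball, dist_eq_norm]
    have : (ω + σ • (EuclideanSpace.single k (1:ℝ) : MFParam d)) - ω
        = σ • (EuclideanSpace.single k (1:ℝ) : MFParam d) := by abel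
    rw [this, norm_smul, EuclideanSpace.norm_single]
    simpa using hσ
  have hε2 : |ε/2| < ε := by rw [abs_of_pos (by linarith)]; linarith
  rcases hact with h|h|h|h
  · have h1 := (hmem (ε/2) (Sum.inl i) hε2 i).1
    have hx : xiP (ω + (ε/2) • (EuclideanSpace.single (Sum.inl i) (1:ℝ) : MFParam d)) i
        = xiP ω i + ε/2 := by
      simp [xiP, PiLp.add_apply, PiLp.smul_apply, EuclideanSpace.single_apply]
    rw [hx, h] at h1
    have := le_abs_self (U + ε/2)
    linarith [abs_le.1 h1]
  · have h1 := (hmem (-(ε/2)) (Sum.inl i) (by rw [abs_neg]; exact hε2) i).1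
    have hx : xiP (ω + (-(ε/2)) • (EuclideanSpace.single (Sum.inl i) (1:ℝ) : MFParam d)) i
        = xiP ω i - ε/2 := by
      simp [xiP, PiLp.add_apply, PiLp.smul_apply, EuclideanSpace.single_apply]; ring
    rw [hx, h] at h1
    have := neg_abs_le (-U - ε/2)
    have h2 := (abs_le.1 h1).1
    linarith
  · have h1 := (hmem (ε/2) (Sum.inr i) hε2 i).2.2
    have hx : varP (ω + (ε/2) • (EuclideanSpace.single (Sum.inr i) (1:ℝ) : MFParam d)) i
        = varP ω i + ε/2 := by
      simp [varP, XiP, xiP, PiLp.add_apply, PiLp.smul_apply, EuclideanSpace.single_apply]; ring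
    rw [hx, h] at h1
    linarith
  · have h1 := (hmem (-(ε/2)) (Sum.inr i) (by rw [abs_neg]; exact hε2) i).2.1
    have hx : varP (ω + (-(ε/2)) • (EuclideanSpace.single (Sum.inr i) (1:ℝ) : MFParam d)) i
        = varP ω i - ε/2 := by
      simp [varP, XiP, xiP, PiLp.add_apply, PiLp.smul_apply, EuclideanSpace.single_apply]; ring
    rw [hx, h] at h1
    linarith

lemma normal_mem_xiU {d : ℕ} {U D : ℝ} {ω : MFParam d} (i : Fin d) (h : xiP ω i = U) :
    (EuclideanSpace.single (Sum.inl i) (1 : ℝ) : MFParam d) ∈ outwardNormals d U D ω := by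
  refine ⟨by simp, fun j => if j = i then 1 else 0, 0, 0, 0, ?_, ?_, ?_, ?_, ?_, ?_⟩
  · intro j; refine ⟨?_, le_refl 0, le_refl 0, le_refl 0⟩; dsimp only; split <;> norm_num
  · intro j hj; by_cases hji : j = i
    · rw [hji]; exact h
    · simp [hji] at hj
  · intro j hj; simp at hj
  · intro j hj; simp at hj
  · intro j hj; simp at hj
  · rw [Finset.sum_eq_single i]
    · simp
    · intro j _ hji; simp [hji]
    · intro hi; exact absurd (Finset.mem_univ i) hi

lemma normal_mem_xiNegU {d : ℕ} {U D : ℝ} {ω : MFParam d} (i : Fin d) (h : xiP ω i = -U) :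
    (-(EuclideanSpace.single (Sum.inl i) (1 : ℝ) : MFParam d)) ∈ outwardNormals d U D ω := by
  refine ⟨by simp, 0, fun j => if j = i then 1 else 0, 0, 0, ?_, ?_, ?_, ?_, ?_, ?_⟩
  · intro j; refine ⟨le_refl 0, ?_, le_refl 0, le_refl 0⟩; dsimp only; split <;> norm_num
  · intro j hj; simp at hj
  · intro j hj; by_cases hji : j = i
    · rw [hji]; exact h
    · simp [hji] at hj
  · intro j hj; simp at hj
  · intro j hj; simp at hj
  · rw [Finset.sum_eq_single i]
    · simp
    · intro j _ hji; simp [hji]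
    · intro hi; exact absurd (Finset.mem_univ i) hi


lemma norm_mix {d : ℕ} (i : Fin d) (x : ℝ) :
    ‖((EuclideanSpace.single (Sum.inr i) (1 : ℝ) : MFParam d) -
        (2 * x) • (EuclideanSpace.single (Sum.inl i) (1 : ℝ) : MFParam d))‖
      = Real.sqrt (1 + 4 * x ^ 2) := by
  rw [norm_eq_sqrt_real_inner]
  congr 1
  simp only [inner_sub_left, inner_sub_right, real_inner_smul_left, real_inner_smul_right]
  have e1 : ⟪(EuclideanSpace.single (Sum.inr i) (1 : ℝ) : MFParam d),
      (EuclideanSpace.single (Sum.inr i) (1 : ℝ) : MFParam d)⟫ = 1 := by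
    rw [EuclideanSpace.inner_single_left]; simp [EuclideanSpace.single_apply]
  have e2 : ⟪(EuclideanSpace.single (Sum.inr i) (1 : ℝ) : MFParam d),
      (EuclideanSpace.single (Sum.inl i) (1 : ℝ) : MFParam d)⟫ = 0 := by
    rw [EuclideanSpace.inner_single_left]; simp [EuclideanSpace.single_apply]
  have e3 : ⟪(EuclideanSpace.single (Sum.inl i) (1 : ℝ) : MFParam d),
      (EuclideanSpace.single (Sum.inr i) (1 : ℝ) : MFParam d)⟫ = 0 := by
    rw [EuclideanSpace.inner_single_left]; simp [EuclideanSpace.single_apply]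
  have e4 : ⟪(EuclideanSpace.single (Sum.inl i) (1 : ℝ) : MFParam d),
      (EuclideanSpace.single (Sum.inl i) (1 : ℝ) : MFParam d)⟫ = 1 := by
    rw [EuclideanSpace.inner_single_left]; simp [EuclideanSpace.single_apply]
  rw [e1, e2, e3, e4]
  ring

lemma normal_mem_varD {d : ℕ} {U D : ℝ} {ω : MFParam d} (i : Fin d) (h : varP ω i = D) :
    ((Real.sqrt (1 + 4 * (xiP ω i) ^ 2))⁻¹ •
      ((EuclideanSpace.single (Sum.inr i) (1 : ℝ) : MFParam d) -
        (2 * xiP ω i) • (EuclideanSpace.single (Sum.inl i) (1 : ℝ) : MFParam d)))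
      ∈ outwardNormals d U D ω := by
  have hpos : (0:ℝ) < 1 + 4 * (xiP ω i) ^ 2 := by positivity
  have hsq : 0 < Real.sqrt (1 + 4 * (xiP ω i) ^ 2) := Real.sqrt_pos.2 hpos
  refine ⟨?_, 0, 0, fun j => if j = i then (Real.sqrt (1 + 4 * (xiP ω i) ^ 2))⁻¹ else 0, 0,
      ?_, ?_, ?_, ?_, ?_, ?_⟩
  · rw [norm_smul, norm_mix]
    rw [Real.norm_eq_abs, abs_of_nonneg (inv_nonneg.2 hsq.le)]
    exact inv_mul_cancel₀ hsq.ne'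
  · intro j; refine ⟨le_refl 0, le_refl 0, ?_, le_refl 0⟩
    dsimp only; split
    · positivity
    · exact le_refl 0
  · intro j hj; simp at hj
  · intro j hj; simp at hj
  · intro j hj; by_cases hji : j = i
    · rw [hji]; exact h
    · simp [hji] at hj
  · intro j hj; simp at hj
  · rw [Finset.sum_eq_single i]
    · simp
    · intro j _ hji; simp [hji]
    · intro hi; exact absurd (Finset.mem_univ i) hi

lemma normal_mem_varInvD {d : ℕ} {U D : ℝ} {ω : MFParam d} (i : Fin d) (h : varP ω i = D⁻¹) :
    ((Real.sqrt (1 + 4 * (xiP ω i) ^ 2))⁻¹ •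
      ((2 * xiP ω i) • (EuclideanSpace.single (Sum.inl i) (1 : ℝ) : MFParam d) -
        (EuclideanSpace.single (Sum.inr i) (1 : ℝ) : MFParam d)))
      ∈ outwardNormals d U D ω := by
  have hpos : (0:ℝ) < 1 + 4 * (xiP ω i) ^ 2 := by positivity
  have hsq : 0 < Real.sqrt (1 + 4 * (xiP ω i) ^ 2) := Real.sqrt_pos.2 hpos
  refine ⟨?_, 0, 0, 0, fun j => if j = i then (Real.sqrt (1 + 4 * (xiP ω i) ^ 2))⁻¹ else 0,
      ?_, ?_, ?_, ?_, ?_, ?_⟩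
  · have : ((2 * xiP ω i) • (EuclideanSpace.single (Sum.inl i) (1 : ℝ) : MFParam d) -
        (EuclideanSpace.single (Sum.inr i) (1 : ℝ) : MFParam d))
        = -((EuclideanSpace.single (Sum.inr i) (1 : ℝ) : MFParam d) -
        (2 * xiP ω i) • (EuclideanSpace.single (Sum.inl i) (1 : ℝ) : MFParam d)) := by abel
    rw [this, norm_smul, norm_neg, norm_mix]
    rw [Real.norm_eq_abs, abs_of_nonneg (inv_nonneg.2 hsq.le)]
    exact inv_mul_cancel₀ hsq.ne'
  · intro j; refine ⟨le_refl 0, le_refl 0, le_refl 0, ?_⟩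
    dsimp only; split
    · positivity
    · exact le_refl 0
  · intro j hj; simp at hj
  · intro j hj; simp at hj
  · intro j hj; simp at hj
  · intro j hj; by_cases hji : j = i
    · rw [hji]; exact h
    · simp [hji] at hj
  · rw [Finset.sum_eq_single i]
    · simp
    · intro j _ hji; simp [hji]
    · intro hi; exact absurd (Finset.mem_univ i) hi


lemma feas_step {d : ℕ} {U D : ℝ} (hd : 0 < d) (hU : 1 ≤ U) (hD : 1 < D)
    {ω v : MFParam d} (hω : ω ∈ OmegaT d U D)
    (hbx1 : ∀ i, xiP ω i = U → 0 < v (Sum.inl i))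
    (hbx2 : ∀ i, xiP ω i = -U → v (Sum.inl i) < 0)
    (hbs3 : ∀ i, varP ω i = D → 0 < v (Sum.inr i) - 2 * xiP ω i * v (Sum.inl i))
    (hbs4 : ∀ i, varP ω i = D⁻¹ → v (Sum.inr i) - 2 * xiP ω i * v (Sum.inl i) < 0) :
    ∃ ε : ℝ, 0 < ε ∧ ∀ t : ℝ, 0 ≤ t → t ≤ ε → ω - t • v ∈ OmegaT d U D := by
  have key : ∀ i : Fin d, ∃ ε : ℝ, 0 < ε ∧ ∀ t : ℝ, 0 ≤ t → t ≤ ε →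
      (|xiP (ω - t • v) i| ≤ U ∧ D⁻¹ ≤ varP (ω - t • v) i ∧ varP (ω - t • v) i ≤ D) := by
    intro i
    obtain ⟨hxi, hv1, hv2⟩ := hω i
    have hxw : ∀ t : ℝ, xiP (ω - t • v) i = xiP ω i - t * v (Sum.inl i) := by
      intro t; simp [xiP, PiLp.sub_apply, PiLp.smul_apply, smul_eq_mul]
    have hvw : ∀ t : ℝ, varP (ω - t • v) i
        = varP ω i - t * (v (Sum.inr i) - 2 * xiP ω i * v (Sum.inl i))
          - t^2 * (v (Sum.inl i))^2 := by
      intro t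
      simp only [varP, XiP, xiP, PiLp.sub_apply, PiLp.smul_apply, smul_eq_mul]
      ring
    obtain ⟨hx1, hx2⟩ := abs_le.1 hxi
    obtain ⟨e1, he1, hc1⟩ := quad_nonneg_small (U - xiP ω i) (v (Sum.inl i)) 0 (by
      rcases eq_or_lt_of_le hx2 with heq | hlt
      · exact Or.inr (Or.inl ⟨by linarith, hbx1 i heq⟩)
      · exact Or.inl (by linarith))
    obtain ⟨e2, he2, hc2⟩ := quad_nonneg_small (U + xiP ω i) (-(v (Sum.inl i))) 0 (by
      rcases eq_or_lt_of_le hx1 with heq | hlt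
      · exact Or.inr (Or.inl ⟨by linarith, by linarith [hbx2 i heq.symm]⟩)
      · exact Or.inl (by linarith))
    obtain ⟨e3, he3, hc3⟩ := quad_nonneg_small (D - varP ω i)
        (v (Sum.inr i) - 2 * xiP ω i * v (Sum.inl i)) ((v (Sum.inl i))^2) (by
      rcases eq_or_lt_of_le hv2 with heq | hlt
      · exact Or.inr (Or.inr ⟨by linarith, le_of_lt (hbs3 i heq), sq_nonneg _⟩)
      · exact Or.inl (by linarith))
    obtain ⟨e4, he4, hc4⟩ := quad_nonneg_small (varP ω i - D⁻¹)
        (-(v (Sum.inr i) - 2 * xiP ω i * v (Sum.inl i))) (-((v (Sum.inl i))^2)) (by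
      rcases eq_or_lt_of_le hv1 with heq | hlt
      · exact Or.inr (Or.inl ⟨by linarith, by linarith [hbs4 i heq.symm]⟩)
      · exact Or.inl (by linarith))
    refine ⟨min (min e1 e2) (min e3 e4), by positivity, ?_⟩
    intro t ht htle
    have l1 := hc1 t ht (le_trans htle (le_trans (min_le_left _ _) (min_le_left _ _)))
    have l2 := hc2 t ht (le_trans htle (le_trans (min_le_left _ _) (min_le_right _ _)))
    have l3 := hc3 t ht (le_trans htle (le_trans (min_le_right _ _) (min_le_left _ _)))
    have l4 := hc4 t ht (le_trans htle (le_trans (min_le_right _ _) (min_le_right _ _)))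
    refine ⟨abs_le.2 ⟨?_, ?_⟩, ?_, ?_⟩
    · rw [hxw t]; nlinarith
    · rw [hxw t]; nlinarith
    · rw [hvw t]; nlinarith
    · rw [hvw t]; nlinarith
  choose f hf1 hf2 using key
  have hne : (Finset.univ : Finset (Fin d)).Nonempty := by
    exact Finset.univ_nonempty_iff.2 (Fin.pos_iff_nonempty.1 hd)
  refine ⟨Finset.univ.inf' hne f, ?_, ?_⟩
  · rw [Finset.lt_inf'_iff]
    exact fun i _ => hf1 i
  · intro t ht htle i
    exact hf2 i t ht (le_trans htle (Finset.inf'_le f (Finset.mem_univ i)))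


lemma coord_breg_bound (s r w1 t : ℝ) (hs : 0 < s) (ht0 : 0 ≤ t) (ht1 : t ≤ 1)
    (hu : t * (|r|/s + w1^2/s) ≤ 1/5) :
    -(1/2) * (Real.log (s - t*r - t^2*w1^2) - Real.log s) - t*r/(2*s)
      ≤ (t^2/2) * (w1^2/s + (5/4)*(r/s)^2) + t^3 * ((5/4)*((r/s)^2 + (w1^2/s)^2)) := by
  have hB : (0:ℝ) ≤ w1^2/s := by positivity
  have hu' : t * (|r/s| + w1^2/s) ≤ 1/5 := by rw [abs_div, abs_of_pos hs]; exact hu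
  have hu5 : |t*(r/s) + t^2*(w1^2/s)| ≤ 1/5 := by
    have h1 : |t*(r/s) + t^2*(w1^2/s)| ≤ t*|r/s| + t^2*(w1^2/s) := by
      refine le_trans (abs_add_le _ _) ?_
      rw [abs_mul, abs_of_nonneg ht0, abs_mul, abs_of_nonneg (sq_nonneg t), abs_of_nonneg hB]
    have h2 : t^2*(w1^2/s) ≤ t*(w1^2/s) := by
      nlinarith [mul_nonneg (mul_nonneg (by linarith : (0:ℝ) ≤ 1-t) ht0) hB]
    linarith
  have h15 : (0:ℝ) < 1 - (t*(r/s) + t^2*(w1^2/s)) := by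
    have := (abs_le.1 hu5).2; linarith
  have hsplit : s - t*r - t^2*w1^2 = s * (1 - (t*(r/s) + t^2*(w1^2/s))) := by
    field_simp; ring
  have hlogd : Real.log (s - t*r - t^2*w1^2) - Real.log s
      = Real.log (1 - (t*(r/s) + t^2*(w1^2/s))) := by
    rw [hsplit, Real.log_mul hs.ne' h15.ne']; ring
  rw [hlogd]
  have hlb := neg_log_le_quad hu5
  have husq : (t*(r/s) + t^2*(w1^2/s))^2
      ≤ t^2*(r/s)^2 + 2*t^3*((r/s)^2 + (w1^2/s)^2) := by
    nlinarith [mul_nonneg (pow_nonneg ht0 3) (sq_nonneg (r/s - w1^2/s)),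
      mul_nonneg (pow_nonneg ht0 3) (sq_nonneg (r/s)),
      mul_nonneg (mul_nonneg (by linarith : (0:ℝ) ≤ 1 - t) (pow_nonneg ht0 3)) (sq_nonneg (w1^2/s))]
  have htr : t*r/(2*s) = t*(r/s)/2 := by rw [← mul_div_assoc, div_div, mul_comm s 2]
  rw [htr]
  nlinarith [hlb, husq]

lemma bregAstar_upper {d : ℕ} {ω v : MFParam d} (hpos : ∀ i, 0 < varP ω i) (t : ℝ)
    (ht0 : 0 ≤ t) (ht1 : t ≤ 1)
    (hu : ∀ i, t * (|v (Sum.inr i) - 2 * xiP ω i * v (Sum.inl i)| / varP ω i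
          + (v (Sum.inl i))^2 / varP ω i) ≤ 1/5) :
    bregAstar (ω - t • v) ω ≤
      (t^2/2) * ∑ i, ((v (Sum.inl i))^2 / varP ω i
          + (5/4) * ((v (Sum.inr i) - 2 * xiP ω i * v (Sum.inl i)) / varP ω i)^2)
        + t^3 * ∑ i, (5/4) * (((v (Sum.inr i) - 2 * xiP ω i * v (Sum.inl i)) / varP ω i)^2
          + ((v (Sum.inl i))^2 / varP ω i)^2) := by
  have hgrad : gradient Astar ω = gradAstar ω := (hasGradientAt_Astar ω hpos).gradient
  have hinner : ⟪gradAstar ω, (ω - t • v) - ω⟫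
      = ∑ i, t * (v (Sum.inr i) - 2 * xiP ω i * v (Sum.inl i)) / (2 * varP ω i) := by
    rw [PiLp.inner_apply]
    simp only [RCLike.inner_apply, conj_trivial]
    rw [Fintype.sum_sum_type, ← Finset.sum_add_distrib]
    refine Finset.sum_congr rfl fun i _ => ?_
    have hs := (hpos i).ne'
    simp only [gradAstar, PiLp.toLp_apply, PiLp.sub_apply, PiLp.smul_apply, smul_eq_mul]
    field_simp
    ring
  have hAsum : bregAstar (ω - t • v) ω
      = ∑ i, (-(1/2) * (Real.log (varP (ω - t • v) i) - Real.log (varP ω i))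
          - t * (v (Sum.inr i) - 2 * xiP ω i * v (Sum.inl i)) / (2 * varP ω i)) := by
    unfold bregAstar
    rw [hgrad, hinner]
    simp only [Astar, mul_sub, Finset.sum_sub_distrib, Finset.mul_sum]
  rw [hAsum]
  have hvw : ∀ i, varP (ω - t • v) i
      = varP ω i - t * (v (Sum.inr i) - 2 * xiP ω i * v (Sum.inl i))
        - t^2 * (v (Sum.inl i))^2 := by
    intro i
    simp only [varP, XiP, xiP, PiLp.sub_apply, PiLp.smul_apply, smul_eq_mul]
    ring
  calc ∑ i, (-(1/2) * (Real.log (varP (ω - t • v) i) - Real.log (varP ω i))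
          - t * (v (Sum.inr i) - 2 * xiP ω i * v (Sum.inl i)) / (2 * varP ω i))
      ≤ ∑ i, ((t^2/2) * ((v (Sum.inl i))^2 / varP ω i
          + (5/4) * ((v (Sum.inr i) - 2 * xiP ω i * v (Sum.inl i)) / varP ω i)^2)
        + t^3 * ((5/4) * (((v (Sum.inr i) - 2 * xiP ω i * v (Sum.inl i)) / varP ω i)^2
          + ((v (Sum.inl i))^2 / varP ω i)^2))) := by
        refine Finset.sum_le_sum fun i _ => ?_
        rw [hvw i]
        exact coord_breg_bound (varP ω i) _ _ t (hpos i) ht0 ht1 (hu i)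
    _ = _ := by rw [Finset.sum_add_distrib, ← Finset.mul_sum, ← Finset.mul_sum]


lemma coord_bound {d : ℕ} {U D : ℝ} (hU : 1 ≤ U) (hD : 1 < D) {p : MFParam d}
    (hp : p ∈ OmegaT d U D) (k : Fin d ⊕ Fin d) : |p k| ≤ U + D + U^2 := by
  have hDpos : (0:ℝ) < D := by linarith
  cases k with
  | inl i =>
      have h1 := (hp i).1
      have : |p (Sum.inl i)| ≤ U := h1
      nlinarith [abs_nonneg (p (Sum.inl i))]
  | inr i =>
      obtain ⟨h1, h2, h3⟩ := hp i
      have hXi : p (Sum.inr i) = varP p i + (xiP p i)^2 := by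
        simp [varP, XiP, xiP]
      have hx2 : (xiP p i)^2 ≤ U^2 := by
        have := sq_abs (xiP p i)
        nlinarith [abs_nonneg (xiP p i)]
      have hinv : (0:ℝ) < D⁻¹ := by positivity
      rw [hXi, abs_le]
      constructor
      · nlinarith [sq_nonneg (xiP p i)]
      · nlinarith
lemma inner_ge {d : ℕ} {U D : ℝ} (hU : 1 ≤ U) (hD : 1 < D) {w' ω : MFParam d}
    (hw' : w' ∈ OmegaT d U D) (hω : ω ∈ OmegaT d U D) (g : MFParam d) :
    -((∑ k, |g k|) * (2*(U+D+U^2))) ≤ ⟪g, w' - ω⟫ := by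
  rw [PiLp.inner_apply]
  simp only [RCLike.inner_apply, conj_trivial]
  have key : ∀ k : Fin d ⊕ Fin d, -(|g k| * (2*(U+D+U^2))) ≤ g k * (w' - ω) k := by
    intro k
    have h1 := coord_bound hU hD hw' k
    have h2 := coord_bound hU hD hω k
    have h3 : |(w' - ω) k| ≤ 2*(U+D+U^2) := by
      rw [PiLp.sub_apply]
      refine le_trans (abs_sub _ _) (by linarith)
    have h4 : -(|g k| * |(w' - ω) k|) ≤ g k * (w' - ω) k := by
      rw [← abs_mul]; exact neg_abs_le _
    have h5 : |g k| * |(w' - ω) k| ≤ |g k| * (2*(U+D+U^2)) :=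
      mul_le_mul_of_nonneg_left h3 (abs_nonneg _)
    linarith
  calc -((∑ k, |g k|) * (2*(U+D+U^2))) = ∑ k, (-(|g k| * (2*(U+D+U^2)))) := by
        rw [Finset.sum_neg_distrib, ← Finset.sum_mul]
    _ ≤ ∑ k, g k * (w' - ω) k := Finset.sum_le_sum fun k _ => key k
    _ = _ := Finset.sum_congr rfl fun k _ => mul_comm _ _

lemma Astar_ge {d : ℕ} {U D : ℝ} (hD : 1 < D) {w' : MFParam d} (hw' : w' ∈ OmegaT d U D) :
    -((d:ℝ)/2) * Real.log D ≤ Astar w' := by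
  have hsum : ∑ i : Fin d, Real.log (varP w' i) ≤ ∑ _i : Fin d, Real.log D := by
    refine Finset.sum_le_sum fun i _ => ?_
    exact Real.log_le_log (lt_of_lt_of_le (by positivity) (hw' i).2.1) (hw' i).2.2
  rw [Finset.sum_const, Finset.card_univ, Fintype.card_fin, nsmul_eq_mul] at hsum
  unfold Astar
  nlinarith
lemma bdd_below_obj {d : ℕ} {U D : ℝ} (hU : 1 ≤ U) (hD : 1 < D) {ω : MFParam d}
    (hω : ω ∈ OmegaT d U D) (g : MFParam d) (ρ : ℝ) (hρ : 0 ≤ ρ) :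
    BddBelow ((fun w' => ⟪g, w' - ω⟫ + ρ * bregAstar w' ω) '' OmegaT d U D) := by
  refine ⟨-((∑ k, |g k|) * (2*(U+D+U^2)))
    + ρ * ((-((d:ℝ)/2) * Real.log D) - Astar ω
        - (∑ k, |gradient Astar ω k|) * (2*(U+D+U^2))), ?_⟩
  rintro y ⟨w', hw', rfl⟩
  have h1 := inner_ge hU hD hw' hω g
  have h2 : (-((d:ℝ)/2) * Real.log D) - Astar ω
      - (∑ k, |gradient Astar ω k|) * (2*(U+D+U^2)) ≤ bregAstar w' ω := by
    unfold bregAstar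
    have h3 := Astar_ge hD hw'
    have h4 : -((∑ k, |gradient Astar ω k|) * (2*(U+D+U^2)))
        ≤ ⟪-(gradient Astar ω), w' - ω⟫ := by
      have := inner_ge hU hD hw' hω (-(gradient Astar ω))
      simpa [PiLp.neg_apply, abs_neg] using this
    rw [inner_neg_left] at h4
    linarith
  have h5 := mul_le_mul_of_nonneg_left h2 hρ
  simp only []
  linarith

lemma inner_neg_single {d : ℕ} (v : MFParam d) (k : Fin d ⊕ Fin d) :
    ⟪-v, (EuclideanSpace.single k (1:ℝ) : MFParam d)⟫ = -(v k) := by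
  rw [EuclideanSpace.inner_single_right]
  simp [PiLp.neg_apply]

lemma inner_neg_mix1 {d : ℕ} (v : MFParam d) (i : Fin d) (x c : ℝ) :
    ⟪-v, c • ((EuclideanSpace.single (Sum.inr i) (1:ℝ) : MFParam d)
        - (2*x) • (EuclideanSpace.single (Sum.inl i) (1:ℝ) : MFParam d))⟫
      = c * (2*x*(v (Sum.inl i)) - v (Sum.inr i)) := by
  rw [real_inner_smul_right, inner_sub_right, real_inner_smul_right,
    EuclideanSpace.inner_single_right, EuclideanSpace.inner_single_right]
  simp only [PiLp.neg_apply, conj_trivial]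
  ring

lemma inner_neg_mix2 {d : ℕ} (v : MFParam d) (i : Fin d) (x c : ℝ) :
    ⟪-v, c • ((2*x) • (EuclideanSpace.single (Sum.inl i) (1:ℝ) : MFParam d)
        - (EuclideanSpace.single (Sum.inr i) (1:ℝ) : MFParam d))⟫
      = c * (v (Sum.inr i) - 2*x*(v (Sum.inl i))) := by
  rw [real_inner_smul_right, inner_sub_right, real_inner_smul_right,
    EuclideanSpace.inner_single_right, EuclideanSpace.inner_single_right]
  simp only [PiLp.neg_apply, conj_trivial]
  ring

lemma inner_invHess {d : ℕ} (ω g : MFParam d) :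
    (∑ k, g k * invHessAstar ω g k)
      = ∑ i, (varP ω i * (g (Sum.inl i) + 2 * xiP ω i * g (Sum.inr i))^2
          + 2 * (varP ω i)^2 * (g (Sum.inr i))^2) := by
  rw [Fintype.sum_sum_type, ← Finset.sum_add_distrib]
  refine Finset.sum_congr rfl fun i _ => ?_
  simp only [invHessAstar, PiLp.toLp_apply]
  ring

lemma normsq_eq {d : ℕ} (g : MFParam d) : ‖g‖^2 = ∑ k, (g k)^2 := by
  rw [← real_inner_self_eq_norm_sq, PiLp.inner_apply]
  simp only [RCLike.inner_apply, conj_trivial, sq]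

lemma Q_lower {d : ℕ} {U D : ℝ} (hU : 1 ≤ U) (hD : 1 < D) {ω : MFParam d}
    (hω : ω ∈ OmegaT d U D) (g : MFParam d) :
    2 * ‖g‖^2 ≤ 7*U^2*D^2 * ∑ i, (varP ω i * (g (Sum.inl i) + 2 * xiP ω i * g (Sum.inr i))^2
          + 2 * (varP ω i)^2 * (g (Sum.inr i))^2) := by
  have hD0 : (0:ℝ) < D := by linarith
  have hsplit : ‖g‖^2 = ∑ i, ((g (Sum.inl i))^2 + (g (Sum.inr i))^2) := by
    rw [normsq_eq, Fintype.sum_sum_type, ← Finset.sum_add_distrib]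
  rw [hsplit, Finset.mul_sum, Finset.mul_sum]
  refine Finset.sum_le_sum fun i _ => ?_
  obtain ⟨h1, h2, h3⟩ := hω i
  have hs1 : 1 ≤ varP ω i * D := by
    have : D⁻¹ * D ≤ varP ω i * D := mul_le_mul_of_nonneg_right h2 (le_of_lt hD0)
    rwa [inv_mul_cancel₀ hD0.ne'] at this
  have hx : (xiP ω i)^2 ≤ U^2 := by
    have := sq_abs (xiP ω i)
    nlinarith [abs_nonneg (xiP ω i)]
  have hspos : 0 < varP ω i := lt_of_lt_of_le (by positivity) h2
  have := block_lb U D (varP ω i) (xiP ω i) (g (Sum.inl i)) (g (Sum.inr i)) hU hD hs1 hx hspos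
  linarith


set_option maxHeartbeats 2000000 in
/-- Proposition D.1, PL implies Bregman Prox-PL under the boundary
assumption: if `ℓ` is `C¹` on a neighborhood of `Ω̃` and the natural gradient points
inward at every boundary point of `Ω̃`, then for every `ω ∈ Ω̃` there is `ρ₀ > 0` such
that for all `ρ ≥ ρ₀`, `ℰ_ρ(ω) ≥ ‖∇ℓ(ω)‖² / (2 C_L)` with `C_L = (9/2)U²D²`. -/
theorem pl_implies_bregman_prox_pl
    {d : ℕ} (hd : 1 ≤ d) (U D : ℝ) (hU : 1 ≤ U) (hD : 1 < D)
    (ℓ : MFParam d → ℝ)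
    (hC1 : ∃ Vo : Set (MFParam d), IsOpen Vo ∧ OmegaT d U D ⊆ Vo ∧ ContDiffOn ℝ 1 ℓ Vo)
    (hboundary : ∀ ω ∈ frontier (OmegaT d U D), ∀ n ∈ outwardNormals d U D ω,
      ⟪-(invHessAstar ω (gradient ℓ ω)), n⟫ < 0) :
    ∀ ω ∈ OmegaT d U D, ∃ ρ₀ : ℝ, 0 < ρ₀ ∧ ∀ ρ : ℝ, ρ₀ ≤ ρ →
      bfbe d U D ℓ ρ ω ≥ ‖gradient ℓ ω‖ ^ 2 / (2 * ((9 / 2) * U ^ 2 * D ^ 2)) := by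
  intro ω hω
  have hD0 : (0:ℝ) < D := by linarith
  have hUD2 : (0:ℝ) < U^2*D^2 := by positivity
  set g := gradient ℓ ω with hg
  clear_value g
  by_cases hg0 : g = 0
  · -- degenerate case : gradient vanishes
    refine ⟨1, one_pos, ?_⟩
    intro ρ hρ
    have hρ0 : (0:ℝ) < ρ := by linarith
    have hRHS : ‖g‖^2 / (2*((9/2)*U^2*D^2)) = 0 := by rw [hg0]; simp
    rw [hRHS]
    unfold bfbe
    rw [← hg]
    by_cases hbb : BddBelow ((fun w' => ⟪g, w' - ω⟫ + ρ * bregAstar w' ω) '' OmegaT d U D)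
    · have hmem : (fun w' => ⟪g, w' - ω⟫ + ρ * bregAstar w' ω) ω
          ∈ ((fun w' => ⟪g, w' - ω⟫ + ρ * bregAstar w' ω) '' OmegaT d U D) :=
        Set.mem_image_of_mem _ hω
      have hsinf := csInf_le hbb hmem
      have hval : (fun w' => ⟪g, w' - ω⟫ + ρ * bregAstar w' ω) ω = 0 := by
        simp [bregAstar, sub_self, inner_zero_right]
      rw [hval] at hsinf
      nlinarith
    · rw [Real.sInf_of_not_bddBelow hbb]
      simp
  -- main case
  have hgnorm : 0 < ‖g‖ := norm_pos_iff.mpr hg0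
  have hpos : ∀ i, 0 < varP ω i := fun i =>
    lt_of_lt_of_le (by positivity) (hω i).2.1
  set v := invHessAstar ω g with hv
  clear_value v
  set Q := ∑ i, (varP ω i * (g (Sum.inl i) + 2 * xiP ω i * g (Sum.inr i))^2
      + 2 * (varP ω i)^2 * (g (Sum.inr i))^2) with hQ
  clear_value Q
  have hQlb : 2*‖g‖^2 ≤ 7*U^2*D^2 * Q := by rw [hQ]; exact Q_lower hU hD hω g
  have hQpos : 0 < Q := by nlinarith [pow_pos hgnorm 2]
  -- boundary sign facts
  have hbx1 : ∀ i, xiP ω i = U → 0 < v (Sum.inl i) := by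
    intro i hxi
    have hfr := mem_frontier_of_active hU hD hω i (Or.inl hxi)
    have hb := hboundary ω hfr _ (normal_mem_xiU (U := U) (D := D) i hxi)
    rw [← hg, ← hv, inner_neg_single] at hb
    linarith
  have hbx2 : ∀ i, xiP ω i = -U → v (Sum.inl i) < 0 := by
    intro i hxi
    have hfr := mem_frontier_of_active hU hD hω i (Or.inr (Or.inl hxi))
    have hb := hboundary ω hfr _ (normal_mem_xiNegU (U := U) (D := D) i hxi)
    rw [← hg, ← hv, inner_neg_right, inner_neg_single] at hb
    linarith
  have hbs3 : ∀ i, varP ω i = D → 0 < v (Sum.inr i) - 2 * xiP ω i * v (Sum.inl i) := by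
    intro i hvi
    have hfr := mem_frontier_of_active hU hD hω i (Or.inr (Or.inr (Or.inl hvi)))
    have hb := hboundary ω hfr _ (normal_mem_varD (U := U) (D := D) i hvi)
    rw [← hg, ← hv, inner_neg_mix1] at hb
    have hc : (0:ℝ) < (Real.sqrt (1 + 4 * (xiP ω i) ^ 2))⁻¹ := by positivity
    nlinarith
  have hbs4 : ∀ i, varP ω i = D⁻¹ → v (Sum.inr i) - 2 * xiP ω i * v (Sum.inl i) < 0 := by
    intro i hvi
    have hfr := mem_frontier_of_active hU hD hω i (Or.inr (Or.inr (Or.inr hvi)))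
    have hb := hboundary ω hfr _ (normal_mem_varInvD (U := U) (D := D) i hvi)
    rw [← hg, ← hv, inner_neg_mix2] at hb
    have hc : (0:ℝ) < (Real.sqrt (1 + 4 * (xiP ω i) ^ 2))⁻¹ := by positivity
    nlinarith
  obtain ⟨εf, hεf, hfeas⟩ := feas_step hd hU hD hω hbx1 hbx2 hbs3 hbs4
  -- constants
  set M := ∑ i, (|v (Sum.inr i) - 2 * xiP ω i * v (Sum.inl i)| / varP ω i
      + (v (Sum.inl i))^2 / varP ω i) with hM
  clear_value M
  have hMterm : ∀ i, 0 ≤ |v (Sum.inr i) - 2 * xiP ω i * v (Sum.inl i)| / varP ω i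
      + (v (Sum.inl i))^2 / varP ω i := by
    intro i; have := hpos i; positivity
  have hMnn : 0 ≤ M := by rw [hM]; exact Finset.sum_nonneg fun i _ => hMterm i
  set E := ∑ i, (5/4) * (((v (Sum.inr i) - 2 * xiP ω i * v (Sum.inl i)) / varP ω i)^2
      + ((v (Sum.inl i))^2 / varP ω i)^2) with hE
  clear_value E
  have hEnn : 0 ≤ E := by rw [hE]; exact Finset.sum_nonneg fun i _ => by positivity
  set P := ∑ i, ((v (Sum.inl i))^2 / varP ω i
      + (5/4) * ((v (Sum.inr i) - 2 * xiP ω i * v (Sum.inl i)) / varP ω i)^2) with hP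
  clear_value P
  have hPQ : P ≤ (5/2) * Q := by
    rw [hP, hQ, Finset.mul_sum]
    refine Finset.sum_le_sum fun i _ => ?_
    have hv1 : v (Sum.inl i)
        = varP ω i * (g (Sum.inl i) + 2 * xiP ω i * g (Sum.inr i)) := by
      rw [hv]; simp only [invHessAstar, PiLp.toLp_apply]; ring
    have hvr : v (Sum.inr i) - 2 * xiP ω i * v (Sum.inl i)
        = 2 * (varP ω i)^2 * (g (Sum.inr i)) := by
      rw [hv]; simp only [invHessAstar, PiLp.toLp_apply]; ring
    rw [hvr, hv1]
    have key : ∀ s x a b : ℝ, 0 < s →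
        (s*(a + 2*x*b))^2/s + (5/4)*((2*s^2*b)/s)^2
          ≤ (5/2)*(s*(a + 2*x*b)^2 + 2*s^2*b^2) := by
      intro s x a b hs
      have h1 : (s*(a + 2*x*b))^2/s = s*(a + 2*x*b)^2 := by field_simp
      have h2 : (2*s^2*b)/s = 2*s*b := by field_simp
      rw [h1, h2]
      nlinarith [mul_nonneg hs.le (sq_nonneg (a + 2*x*b))]
    exact key _ _ _ _ (hpos i)
  -- linear term identity
  have hlin : ∀ t : ℝ, ⟪g, (ω - t • v) - ω⟫ = -(t * Q) := by
    intro t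
    rw [PiLp.inner_apply]
    simp only [RCLike.inner_apply, conj_trivial, PiLp.sub_apply, PiLp.smul_apply, smul_eq_mul]
    have hterm : ∀ k, (ω k - t * v k - ω k) * g k = -(t * (g k * v k)) := fun k => by ring
    rw [Finset.sum_congr rfl (fun k _ => hterm k), Finset.sum_neg_distrib, ← Finset.mul_sum]
    rw [hv, inner_invHess ω g, ← hQ]
  -- step sizes
  have hM1 : (0:ℝ) < 5*(M+1) := by linarith
  have hE1 : (0:ℝ) < 28*(E+1) := by linarith
  set tbar := min εf (min (1/(5*(M+1))) (Q/(28*(E+1)))) with htbar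
  clear_value tbar
  have htbar_pos : 0 < tbar := by
    rw [htbar]; exact lt_min hεf (lt_min (by positivity) (by positivity))
  refine ⟨1/((18/7)*tbar) + 1, by positivity, ?_⟩
  intro ρ hρ
  have hρpos : (0:ℝ) < ρ := lt_of_lt_of_le (by positivity) hρ
  set t := 1/((18/7)*ρ) with ht
  clear_value t
  have htpos : 0 < t := by rw [ht]; positivity
  have htle : t ≤ tbar := by
    rw [ht, div_le_iff₀ (by positivity)]
    have h1 : 1/((18/7)*tbar) ≤ ρ := by linarith
    calc (1:ℝ) = ((18/7)*tbar) * (1/((18/7)*tbar)) := by field_simp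
      _ ≤ ((18/7)*tbar) * ρ := mul_le_mul_of_nonneg_left h1 (by positivity)
      _ = tbar * ((18/7)*ρ) := by ring
  have htu : t ≤ 1/(5*(M+1)) := by
    refine le_trans htle ?_; rw [htbar]
    exact le_trans (min_le_right _ _) (min_le_left _ _)
  have htq : t ≤ Q/(28*(E+1)) := by
    refine le_trans htle ?_; rw [htbar]
    exact le_trans (min_le_right _ _) (min_le_right _ _)
  have ht1 : t ≤ 1 := by
    refine le_trans htu ?_
    rw [div_le_one hM1]; linarith
  -- condition |u| small
  have hu : ∀ i, t * (|v (Sum.inr i) - 2 * xiP ω i * v (Sum.inl i)| / varP ω i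
      + (v (Sum.inl i))^2 / varP ω i) ≤ 1/5 := by
    intro i
    have hle : |v (Sum.inr i) - 2 * xiP ω i * v (Sum.inl i)| / varP ω i
        + (v (Sum.inl i))^2 / varP ω i ≤ M := by
      rw [hM]
      exact Finset.single_le_sum (fun j _ => hMterm j) (Finset.mem_univ i)
    have h1 : t * (|v (Sum.inr i) - 2 * xiP ω i * v (Sum.inl i)| / varP ω i
        + (v (Sum.inl i))^2 / varP ω i) ≤ (1/(5*(M+1))) * (M+1) :=
      mul_le_mul htu (by linarith) (hMterm i) (by positivity)
    have h2 : (1/(5*(M+1))) * (M+1) = 1/5 := by field_simp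
    linarith
  have hbreg := bregAstar_upper hpos t htpos.le ht1 hu
  rw [← hP, ← hE] at hbreg
  have hcube : t^3 * E ≤ (t^2/2) * ((1/14) * Q) := by
    have h1 : t * E ≤ (Q/(28*(E+1))) * E := mul_le_mul_of_nonneg_right htq hEnn
    have h2 : (Q/(28*(E+1))) * E ≤ Q/28 := by
      rw [div_mul_eq_mul_div, div_le_div_iff₀ hE1 (by norm_num : (0:ℝ) < 28)]
      nlinarith
    calc t^3*E = t^2*(t*E) := by ring
      _ ≤ t^2*(Q/28) := mul_le_mul_of_nonneg_left (le_trans h1 h2) (sq_nonneg t)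
      _ = (t^2/2)*((1/14)*Q) := by ring
  have hφ : bregAstar (ω - t • v) ω ≤ (t^2/2) * ((18/7)*Q) := by
    have h3 : (t^2/2)*P ≤ (t^2/2)*((5/2)*Q) :=
      mul_le_mul_of_nonneg_left hPQ (by positivity)
    calc bregAstar (ω - t • v) ω ≤ (t^2/2)*P + t^3*E := hbreg
      _ ≤ (t^2/2)*((5/2)*Q) + (t^2/2)*((1/14)*Q) := by linarith
      _ = (t^2/2)*((18/7)*Q) := by ring
  have hwmem : ω - t • v ∈ OmegaT d U D := by
    refine hfeas t htpos.le (le_trans htle ?_); rw [htbar]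
    exact min_le_left _ _
  have hobj : ⟪g, (ω - t • v) - ω⟫ + ρ * bregAstar (ω - t • v) ω ≤ -(t*Q)/2 := by
    rw [hlin t]
    have h4 : ρ * bregAstar (ω - t • v) ω ≤ ρ * ((t^2/2)*((18/7)*Q)) :=
      mul_le_mul_of_nonneg_left hφ hρpos.le
    have hid : ρ * ((t^2/2)*((18/7)*Q)) = (t*Q)/2 := by
      rw [ht]; field_simp
    linarith
  have hbdd := bdd_below_obj hU hD hω g ρ hρpos.le
  have hsinf : sInf ((fun w' => ⟪g, w' - ω⟫ + ρ * bregAstar w' ω) '' OmegaT d U D)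
      ≤ -(t*Q)/2 :=
    le_trans (csInf_le hbdd (Set.mem_image_of_mem _ hwmem)) hobj
  have hbfbe : ρ*t*Q ≤ bfbe d U D ℓ ρ ω := by
    unfold bfbe
    rw [← hg]
    nlinarith
  have hval : ρ*t*Q = (7/18)*Q := by rw [ht]; field_simp
  have hfin : ‖g‖^2 / (2*((9/2)*U^2*D^2)) ≤ (7/18)*Q := by
    rw [div_le_iff₀ (by positivity)]
    nlinarith
  rw [ge_iff_le]
  calc ‖g‖^2 / (2*((9/2)*U^2*D^2)) ≤ (7/18)*Q := hfin
    _ = ρ*t*Q := hval.symm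
    _ ≤ bfbe d U D ℓ ρ ω := hbfbe

end
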